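/- Let F_2[d_2, d_3, d_4] be the polynomial ring in three (algebraically independent) variables d_2, d_3, d_4 over F_2, and set d_6 = d_2 d_4 + d_2^3 + d_3^2 and d_7 = d_3 d_4 + d_2^2 d_3. Then the intersection of the F_2[d_3, d_2^2, d_4^2]-submodule of F_2[d_2, d_3, d_4] generated by {1, d_2 d_3, d_3 d_4, d_2 d_3 d_4} with the subalgebra F_2[d_4, d_6, d_7] equals the F_2[d_4^2, d_6^2, d_7]-submodule generated by {1, d_4 d_7, d_6 d_7, d_4 d_6 d_7}; equivalently, this intersection equals F_2[d_4^2, d_6^2] ⊕ d_7·F_2[d_4, d_6, d_7] (internal direct sum of F_2-submodules of F_2[d_2, d_3, d_4]). -/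

import Mathlib

open MvPolynomial

namespace InterDickson
noncomputable section
open Algebra

local notation "𝔽" => ZMod 2
abbrev S := MvPolynomial (Fin 3) (ZMod 2)

def pa : S := X 0
def pb : S := X 1
def pc : S := X 2
def p6 : S := pa * pc + pa ^ 3 + pb ^ 2
def p7 : S := pb * pc + pa ^ 2 * pb
def pe : S := pa * pc + pa ^ 3

lemma h2 : (2 : S) = 0 := by
  have : (2 : S) = C (2 : 𝔽) := (map_ofNat C 2).symm
  rw [this, show (2 : 𝔽) = 0 from rfl, map_zero]


lemma fin2_cases (i : Fin 2) : i = 0 ∨ i = 1 := by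
  rcases i with ⟨iv, h⟩
  interval_cases iv
  · exact Or.inl rfl
  · exact Or.inr rfl

lemma fin3_cases (i : Fin 3) : i = 0 ∨ i = 1 ∨ i = 2 := by
  rcases i with ⟨iv, h⟩
  interval_cases iv
  · exact Or.inl rfl
  · exact Or.inr (Or.inl rfl)
  · exact Or.inr (Or.inr rfl)

def R1 : Subalgebra 𝔽 S := adjoin 𝔽 {pb, pa ^ 2, pc ^ 2}
def R2 : Subalgebra 𝔽 S := adjoin 𝔽 {pc ^ 2, p6 ^ 2, p7}
def AA : Subalgebra 𝔽 S := adjoin 𝔽 {pc, p6, p7}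
def B0 : Subalgebra 𝔽 S := adjoin 𝔽 {pc ^ 2, p6 ^ 2}
def MM : Submodule ↥R1 S := Submodule.span ↥R1 {1, pa * pb, pb * pc, pa * pb * pc}
def NN : Submodule ↥R2 S := Submodule.span ↥R2 {1, pc * p7, p6 * p7, pc * p6 * p7}

lemma smul_coe {T : Subalgebra 𝔽 S} (w : ↥T) (x : S) : w • x = (w : S) * x := rfl

lemma mul_gen_mem {T : Subalgebra 𝔽 S} {s : Set S} {w g : S} (hw : w ∈ T) (hg : g ∈ s) :
    w * g ∈ Submodule.span ↥T s := by
  have := Submodule.smul_mem (Submodule.span ↥T s) ⟨w, hw⟩ (Submodule.subset_span hg)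
  rwa [smul_coe] at this

lemma self_mem_span {T : Subalgebra 𝔽 S} {s : Set S} {w : S} (hw : w ∈ T) (h1 : (1:S) ∈ s) :
    w ∈ Submodule.span ↥T s := by
  have := mul_gen_mem hw h1
  rwa [mul_one] at this

lemma hb : pb ∈ R1 := subset_adjoin (by simp)
lemma ha2 : pa ^ 2 ∈ R1 := subset_adjoin (by simp)
lemma hc2 : pc ^ 2 ∈ R1 := subset_adjoin (by simp)

lemma MM_mul_mem : ∀ x ∈ MM, ∀ y ∈ MM, x * y ∈ MM := by
  have hle : MM * MM ≤ MM := by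
    rw [MM, Submodule.span_mul_span, Submodule.span_le]
    rintro z hz
    rw [Set.mem_mul] at hz
    obtain ⟨x, hx, y, hy, rfl⟩ := hz
    simp only [Set.mem_insert_iff, Set.mem_singleton_iff] at hx hy
    rw [SetLike.mem_coe]
    rcases hx with rfl | rfl | rfl | rfl <;> rcases hy with rfl | rfl | rfl | rfl
    · rw [one_mul]; exact Submodule.subset_span (by simp)
    · rw [one_mul]; exact Submodule.subset_span (by simp)
    · rw [one_mul]; exact Submodule.subset_span (by simp)
    · rw [one_mul]; exact Submodule.subset_span (by simp)
    · rw [mul_one]; exact Submodule.subset_span (by simp)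
    · rw [show pa*pb*(pa*pb) = pa^2*pb^2 * 1 by ring]
      exact mul_gen_mem (mul_mem ha2 (pow_mem hb 2)) (by simp)
    · rw [show pa*pb*(pb*pc) = pb*(pa*pb*pc) by ring]
      exact mul_gen_mem hb (by simp)
    · rw [show pa*pb*(pa*pb*pc) = (pa^2*pb)*(pb*pc) by ring]
      exact mul_gen_mem (mul_mem ha2 hb) (by simp)
    · rw [mul_one]; exact Submodule.subset_span (by simp)
    · rw [show pb*pc*(pa*pb) = pb*(pa*pb*pc) by ring]
      exact mul_gen_mem hb (by simp)
    · rw [show pb*pc*(pb*pc) = pb^2*pc^2 * 1 by ring]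
      exact mul_gen_mem (mul_mem (pow_mem hb 2) hc2) (by simp)
    · rw [show pb*pc*(pa*pb*pc) = (pb*pc^2)*(pa*pb) by ring]
      exact mul_gen_mem (mul_mem hb hc2) (by simp)
    · rw [mul_one]; exact Submodule.subset_span (by simp)
    · rw [show pa*pb*pc*(pa*pb) = (pa^2*pb)*(pb*pc) by ring]
      exact mul_gen_mem (mul_mem ha2 hb) (by simp)
    · rw [show pa*pb*pc*(pb*pc) = (pb*pc^2)*(pa*pb) by ring]
      exact mul_gen_mem (mul_mem hb hc2) (by simp)
    · rw [show pa*pb*pc*(pa*pb*pc) = (pa^2*pb^2*pc^2) * 1 by ring]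
      exact mul_gen_mem (mul_mem (mul_mem ha2 (pow_mem hb 2)) hc2) (by simp)
  intro x hx y hy
  exact hle (Submodule.mul_mem_mul hx hy)


lemma hp7R2 : p7 ∈ R2 := subset_adjoin (by simp)
lemma hp62R2 : p6 ^ 2 ∈ R2 := subset_adjoin (by simp)
lemma hpc2R2 : pc ^ 2 ∈ R2 := subset_adjoin (by simp)
lemma hpcAA : pc ∈ AA := subset_adjoin (by simp)
lemma hp6AA : p6 ∈ AA := subset_adjoin (by simp)
lemma hp7AA : p7 ∈ AA := subset_adjoin (by simp)
lemma B0_le_AA : B0 ≤ AA :=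
  adjoin_le (by rintro z (rfl | rfl) <;> exact pow_mem (by simp [hpcAA, hp6AA]) 2)
lemma B0_le_R2 : B0 ≤ R2 := adjoin_le (by
  rintro z (rfl | rfl)
  · exact hpc2R2
  · exact hp62R2)
lemma R2_le_AA : R2 ≤ AA := adjoin_le (by
  rintro z (rfl | rfl | rfl)
  · exact pow_mem hpcAA 2
  · exact pow_mem hp6AA 2
  · exact hp7AA)

lemma R2_sub_MM : ∀ r ∈ R2, r ∈ MM := by
  intro r hr
  induction hr using adjoin_induction with
  | mem z hz =>
    rcases hz with rfl | rfl | rfl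
    · rw [show pc ^ 2 = pc ^ 2 * 1 by ring]
      exact mul_gen_mem hc2 (by simp)
    · rw [show p6 ^ 2 = (pa^2*pc^2 + (pa^2)^3 + pb^4) * 1 by
        rw [p6]; linear_combination (pa^4*pc + pa*pc*pb^2 + pa^3*pb^2) * h2]
      exact mul_gen_mem (add_mem (add_mem (mul_mem ha2 hc2) (pow_mem ha2 3)) (pow_mem hb 4)) (by simp)
    · rw [p7, show pb * pc + pa^2*pb = pa^2*pb * 1 + pb*pc by ring]
      exact add_mem (mul_gen_mem (mul_mem ha2 hb) (by simp)) (Submodule.subset_span (by simp))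
  | algebraMap r =>
    rw [show (algebraMap 𝔽 S) r = (algebraMap 𝔽 S) r * 1 by ring]
    exact mul_gen_mem (Subalgebra.algebraMap_mem R1 r) (by simp)
  | add x y hx hy ihx ihy => exact add_mem ihx ihy
  | mul x y hx hy ihx ihy => exact MM_mul_mem x ihx y ihy

lemma NN_sub_MM : ∀ x ∈ NN, x ∈ MM := by
  intro x hx
  induction hx using Submodule.span_induction with
  | mem z hz =>
    rcases hz with rfl | rfl | rfl | rfl
    · exact Submodule.subset_span (by simp)
    · rw [show pc * p7 = pb*pc^2 * 1 + pa^2 * (pb*pc) by rw [p7]; ring]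
      exact add_mem (mul_gen_mem (mul_mem hb hc2) (by simp)) (mul_gen_mem ha2 (by simp))
    · rw [show p6 * p7 = (pc^2+(pa^2)^2)*(pa*pb) + pb^2*(pb*pc) + pa^2*pb^3*1 by
        rw [p6, p7]; linear_combination (pa^3*pb*pc) * h2]
      refine add_mem (add_mem ?_ ?_) ?_
      · exact mul_gen_mem (add_mem hc2 (pow_mem ha2 2)) (by simp)
      · exact mul_gen_mem (pow_mem hb 2) (by simp)
      · exact mul_gen_mem (mul_mem ha2 (pow_mem hb 3)) (by simp)
    · rw [show pc * p6 * p7 = (pc^2+(pa^2)^2)*(pa*pb*pc) + pb^3*pc^2*1 + pa^2*pb^2*(pb*pc) by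
        rw [p6, p7]; linear_combination (pa^3*pb*pc^2) * h2]
      refine add_mem (add_mem ?_ ?_) ?_
      · exact mul_gen_mem (add_mem hc2 (pow_mem ha2 2)) (by simp)
      · exact mul_gen_mem (mul_mem (pow_mem hb 3) hc2) (by simp)
      · exact mul_gen_mem (mul_mem ha2 (pow_mem hb 2)) (by simp)
  | zero => exact zero_mem MM
  | add x y hx hy ihx ihy => exact add_mem ihx ihy
  | smul r x hx ihx =>
    rw [smul_coe]
    exact MM_mul_mem _ (R2_sub_MM _ r.2) _ ihx

lemma NN_sub_AA : ∀ x ∈ NN, x ∈ AA := by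
  intro x hx
  induction hx using Submodule.span_induction with
  | mem z hz =>
    rcases hz with rfl | rfl | rfl | rfl
    · exact one_mem AA
    · exact mul_mem hpcAA hp7AA
    · exact mul_mem hp6AA hp7AA
    · exact mul_mem (mul_mem hpcAA hp6AA) hp7AA
  | zero => exact zero_mem AA
  | add x y hx hy ihx ihy => exact add_mem ihx ihy
  | smul r x hx ihx =>
    rw [smul_coe]
    exact mul_mem (R2_le_AA r.2) ihx


def A4 : Submodule ↥R2 S := Submodule.span ↥R2 {1, pc, p6, pc * p6}

lemma A4_mul_mem : ∀ x ∈ A4, ∀ y ∈ A4, x * y ∈ A4 := by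
  have hle : A4 * A4 ≤ A4 := by
    rw [A4, Submodule.span_mul_span, Submodule.span_le]
    rintro z hz
    rw [Set.mem_mul] at hz
    obtain ⟨x, hx, y, hy, rfl⟩ := hz
    simp only [Set.mem_insert_iff, Set.mem_singleton_iff] at hx hy
    rw [SetLike.mem_coe]
    rcases hx with rfl | rfl | rfl | rfl <;> rcases hy with rfl | rfl | rfl | rfl
    · rw [one_mul]; exact Submodule.subset_span (by simp)
    · rw [one_mul]; exact Submodule.subset_span (by simp)
    · rw [one_mul]; exact Submodule.subset_span (by simp)
    · rw [one_mul]; exact Submodule.subset_span (by simp)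
    · rw [mul_one]; exact Submodule.subset_span (by simp)
    · rw [show pc * pc = pc^2 * 1 by ring]; exact mul_gen_mem hpc2R2 (by simp)
    · exact Submodule.subset_span (by simp)
    · rw [show pc*(pc*p6) = pc^2 * p6 by ring]; exact mul_gen_mem hpc2R2 (by simp)
    · rw [mul_one]; exact Submodule.subset_span (by simp)
    · rw [show p6 * pc = pc * p6 by ring]; exact Submodule.subset_span (by simp)
    · rw [show p6 * p6 = p6^2 * 1 by ring]; exact mul_gen_mem hp62R2 (by simp)
    · rw [show p6*(pc*p6) = p6^2 * pc by ring]; exact mul_gen_mem hp62R2 (by simp)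
    · rw [mul_one]; exact Submodule.subset_span (by simp)
    · rw [show pc*p6*pc = pc^2 * p6 by ring]; exact mul_gen_mem hpc2R2 (by simp)
    · rw [show pc*p6*p6 = p6^2 * pc by ring]; exact mul_gen_mem hp62R2 (by simp)
    · rw [show pc*p6*(pc*p6) = (pc^2*p6^2) * 1 by ring]
      exact mul_gen_mem (mul_mem hpc2R2 hp62R2) (by simp)
  intro x hx y hy
  exact hle (Submodule.mul_mem_mul hx hy)

lemma AA_sub_A4 : ∀ x ∈ AA, x ∈ A4 := by
  intro x hx
  induction hx using adjoin_induction with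
  | mem z hz =>
    rcases hz with rfl | rfl | rfl
    · exact Submodule.subset_span (by simp)
    · exact Submodule.subset_span (by simp)
    · exact self_mem_span hp7R2 (by simp)
  | algebraMap r => exact self_mem_span (Subalgebra.algebraMap_mem R2 r) (by simp)
  | add x y hx hy ihx ihy => exact add_mem ihx ihy
  | mul x y hx hy ihx ihy => exact A4_mul_mem x ihx y ihy

lemma p7A4_sub_NN : ∀ h ∈ A4, p7 * h ∈ NN := by
  intro h h4
  induction h4 using Submodule.span_induction with
  | mem z hz =>
    rcases hz with rfl | rfl | rfl | rfl
    · rw [mul_one]; exact self_mem_span hp7R2 (by simp)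
    · rw [mul_comm]; exact Submodule.subset_span (by simp)
    · rw [mul_comm]; exact Submodule.subset_span (by simp)
    · rw [show p7 * (pc * p6) = pc * p6 * p7 by ring]
      exact Submodule.subset_span (by simp)
  | zero => rw [mul_zero]; exact zero_mem NN
  | add x y hx hy ihx ihy => rw [mul_add]; exact add_mem ihx ihy
  | smul r x hx ihx =>
    rw [mul_smul_comm]
    exact Submodule.smul_mem NN r ihx

lemma p7A_sub_NN : ∀ h ∈ AA, p7 * h ∈ NN := fun h hh => p7A4_sub_NN h (AA_sub_A4 h hh)

lemma R2_split : ∀ r ∈ R2, ∃ r0 ∈ B0, ∃ r1 ∈ AA, r = r0 + p7 * r1 := by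
  intro r hr
  induction hr using adjoin_induction with
  | mem z hz =>
    rcases hz with rfl | rfl | rfl
    · exact ⟨pc ^ 2, subset_adjoin (by simp), 0, zero_mem AA, by ring⟩
    · exact ⟨p6 ^ 2, subset_adjoin (by simp), 0, zero_mem AA, by ring⟩
    · exact ⟨0, zero_mem B0, 1, one_mem AA, by ring⟩
  | algebraMap r => exact ⟨algebraMap 𝔽 S r, Subalgebra.algebraMap_mem B0 r, 0, zero_mem AA, by ring⟩
  | add x y hx hy ihx ihy =>
    obtain ⟨x0, hx0, x1, hx1, rfl⟩ := ihx
    obtain ⟨y0, hy0, y1, hy1, rfl⟩ := ihy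
    exact ⟨x0 + y0, add_mem hx0 hy0, x1 + y1, add_mem hx1 hy1, by ring⟩
  | mul x y hx hy ihx ihy =>
    obtain ⟨x0, hx0, x1, hx1, rfl⟩ := ihx
    obtain ⟨y0, hy0, y1, hy1, rfl⟩ := ihy
    exact ⟨x0 * y0, mul_mem hx0 hy0, x0 * y1 + x1 * y0 + p7 * (x1 * y1),
      add_mem (add_mem (mul_mem (B0_le_AA hx0) hy1) (mul_mem hx1 (B0_le_AA hy0)))
        (mul_mem hp7AA (mul_mem hx1 hy1)), by ring⟩

def σ : S →ₐ[𝔽] S := aeval ![X 0, 0, X 2]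

lemma σ_pa : σ pa = pa := by simp [σ, pa]
lemma σ_pb : σ pb = 0 := by simp [σ, pb]
lemma σ_pc : σ pc = pc := by simp [σ, pc]
lemma σ_p6 : σ p6 = pe := by simp [σ, p6, pe, pa, pb, pc]
lemma σ_p7 : σ p7 = 0 := by simp [σ, p7, pa, pb, pc]

lemma cast2 : ((2:ℕ) : S) = 0 := by rw [Nat.cast_ofNat, h2]
lemma cast3 : ((3:ℕ) : S) = 1 := by
  rw [Nat.cast_ofNat, show (3:S) = 2 + 1 by norm_num, h2, zero_add]

lemma pd0_pa2 : pderiv 0 (pa ^ 2) = 0 := by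
  rw [pa, pderiv_pow]; simp [cast2, h2]
lemma pd0_pb : pderiv 0 pb = 0 := by simp [pb]
lemma pd0_pc2 : pderiv 0 (pc ^ 2) = 0 := by simp [pc, pderiv_pow]
lemma pd2_pb : pderiv 2 pb = 0 := by simp [pb]
lemma pd2_pa2 : pderiv 2 (pa ^ 2) = 0 := by simp [pa, pderiv_pow]
lemma pd2_pc2 : pderiv 2 (pc ^ 2) = 0 := by
  rw [pc, pderiv_pow]; simp [cast2, h2]

lemma pd0_p6 : pderiv 0 p6 = pc + pa ^ 2 := by
  rw [p6, pa, pb, pc]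
  simp only [map_add, pderiv_pow, pderiv_mul, pderiv_X_self,
    pderiv_X_of_ne (show (2:Fin 3) ≠ 0 by decide),
    pderiv_X_of_ne (show (1:Fin 3) ≠ 0 by decide), mul_one, mul_zero, zero_mul, add_zero, zero_add,
    cast2, cast3, h2]
  try norm_num
lemma pd2_p6 : pderiv 2 p6 = pa := by
  rw [p6, pa, pb, pc]
  simp only [map_add, pderiv_pow, pderiv_mul, pderiv_X_self,
    pderiv_X_of_ne (show (0:Fin 3) ≠ 2 by decide),
    pderiv_X_of_ne (show (1:Fin 3) ≠ 2 by decide), mul_one, mul_zero, zero_mul, add_zero, zero_add]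
lemma pd0_p7 : pderiv 0 p7 = 0 := by
  rw [p7, pa, pb, pc]
  simp only [map_add, pderiv_mul, pderiv_pow, pderiv_X_self,
    pderiv_X_of_ne (show (2:Fin 3) ≠ 0 by decide),
    pderiv_X_of_ne (show (1:Fin 3) ≠ 0 by decide), mul_one, mul_zero, zero_mul, add_zero, zero_add,
    cast2, h2]
  try norm_num
lemma pd2_p7 : pderiv 2 p7 = pb := by
  rw [p7, pa, pb, pc]
  simp only [map_add, pderiv_mul, pderiv_pow, pderiv_X_self,
    pderiv_X_of_ne (show (0:Fin 3) ≠ 2 by decide),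
    pderiv_X_of_ne (show (1:Fin 3) ≠ 2 by decide), mul_one, mul_zero, zero_mul, add_zero, zero_add]

-- chain rule
lemma chain (v : Fin 2 → S) (j : Fin 3) (Q : MvPolynomial (Fin 2) 𝔽) :
    pderiv j (aeval v Q) =
      aeval v (pderiv 0 Q) * pderiv j (v 0) + aeval v (pderiv 1 Q) * pderiv j (v 1) := by
  induction Q using MvPolynomial.induction_on with
  | C r => simp
  | add p q hp hq => simp only [map_add, hp, hq]; ring
  | mul_X p i hp =>
    have hi : i = 0 ∨ i = 1 := by omega
    rcases hi with rfl | rfl <;>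
      simp only [map_mul, aeval_X, pderiv_mul, hp, pderiv_X_self, map_add,
        pderiv_X_of_ne (show (0:Fin 2) ≠ 1 by decide),
        pderiv_X_of_ne (show (1:Fin 2) ≠ 0 by decide), map_zero, mul_one, mul_zero,
        add_zero, zero_add, zero_mul] <;> ring

lemma hR1d : ∀ r ∈ R1, pderiv 0 r = 0 ∧ pderiv 2 r = 0 := by
  intro r hr
  induction hr using adjoin_induction with
  | mem z hz =>
    rcases hz with rfl | rfl | rfl
    · exact ⟨pd0_pb, pd2_pb⟩
    · exact ⟨pd0_pa2, pd2_pa2⟩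
    · exact ⟨pd0_pc2, pd2_pc2⟩
  | algebraMap r => constructor <;> simp [algebraMap_eq]
  | add x y hx hy ihx ihy => simp [ihx.1, ihx.2, ihy.1, ihy.2]
  | mul x y hx hy ihx ihy => simp [pderiv_mul, ihx.1, ihx.2, ihy.1, ihy.2]

lemma pd0_X1 : pderiv 0 (X 1 : S) = 0 := pderiv_X_of_ne (by decide)
lemma pd0_X2 : pderiv 0 (X 2 : S) = 0 := pderiv_X_of_ne (by decide)
lemma pd2_X0 : pderiv 2 (X 0 : S) = 0 := pderiv_X_of_ne (by decide)
lemma pd2_X1 : pderiv 2 (X 1 : S) = 0 := pderiv_X_of_ne (by decide)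

lemma hMker : ∀ p ∈ MM, σ (pderiv 0 p) = 0 ∧ σ (pderiv 2 p) = 0 := by
  intro p hp
  induction hp using Submodule.span_induction with
  | mem z hz =>
    rcases hz with rfl | rfl | rfl | rfl <;> constructor <;>
      simp [pa, pb, pc, pderiv_mul, pderiv_X_self, pd0_X1, pd0_X2, pd2_X0, pd2_X1, σ]
  | zero => simp
  | add x y hx hy ihx ihy => simp [ihx.1, ihx.2, ihy.1, ihy.2]
  | smul r x hx ihx =>
    have hr := hR1d r r.2
    rw [smul_coe]
    constructor <;> rw [pderiv_mul] <;> simp [hr.1, hr.2, ihx.1, ihx.2]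
lemma coeff_pderiv (i : Fin 2) (Q : MvPolynomial (Fin 2) 𝔽) (t : Fin 2 →₀ ℕ) :
    coeff t (pderiv i Q) = (↑(t i) + 1) * coeff (t + Finsupp.single i 1) Q := by
  induction Q using MvPolynomial.induction_on' with
  | add p q hp hq => simp only [map_add, coeff_add, hp, hq]; ring
  | monomial s r =>
    rw [pderiv_monomial, coeff_monomial, coeff_monomial]
    rcases Nat.eq_zero_or_pos (s i) with h0 | h0
    · have hne : ¬ s = t + Finsupp.single i 1 := by
        intro h; rw [h] at h0; simp at h0
      rw [if_neg hne, h0]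
      simp
    · by_cases h : s = t + Finsupp.single i 1
      · subst h
        have hts : t + Finsupp.single i 1 - Finsupp.single i 1 = t := by
          exact add_tsub_cancel_right _ _
        rw [if_pos hts, if_pos rfl]
        have h2 : ((t + Finsupp.single i 1 : Fin 2 →₀ ℕ)) i = t i + 1 := by
          rw [Finsupp.add_apply, Finsupp.single_eq_same]
        rw [h2]
        push_cast
        ring
      · have hle : Finsupp.single i 1 ≤ s := by
          rw [Finsupp.single_le_iff]; omega
        have hne2 : ¬ s - Finsupp.single i 1 = t := by
          intro heq
          exact h (by rw [← heq, tsub_add_cancel_of_le hle])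
        rw [if_neg hne2, if_neg h]
        ring

lemma even_of_pderiv_zero (i : Fin 2) (Q : MvPolynomial (Fin 2) 𝔽) (h : pderiv i Q = 0)
    (m : Fin 2 →₀ ℕ) (hm : m ∈ Q.support) : Even (m i) := by
  by_contra hodd
  rw [Nat.not_even_iff_odd] at hodd
  have h1 : m i ≥ 1 := hodd.pos
  have hle : Finsupp.single i 1 ≤ m := by rw [Finsupp.single_le_iff]; omega
  have key := coeff_pderiv i Q (m - Finsupp.single i 1)
  rw [h, tsub_add_cancel_of_le hle, coeff_zero] at key
  have ht : ((((m - Finsupp.single i 1 : Fin 2 →₀ ℕ)) i : ℕ) : 𝔽) = 0 := by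
    rw [Finsupp.tsub_apply, Finsupp.single_eq_same]
    obtain ⟨k, hk⟩ := hodd
    rw [hk, show 2 * k + 1 - 1 = k + k by omega]
    push_cast
    rw [show ((k:𝔽) + k) = 2 * k by ring, show (2:𝔽) = 0 from rfl, zero_mul]
  rw [ht, zero_add, one_mul] at key
  exact (mem_support_iff.mp hm) key.symm

lemma squares_of_pderiv_zero (Q : MvPolynomial (Fin 2) 𝔽) (h0 : pderiv 0 Q = 0)
    (h1 : pderiv 1 Q = 0) :
    Q ∈ adjoin 𝔽 {(X 0 : MvPolynomial (Fin 2) 𝔽) ^ 2, (X 1 : MvPolynomial (Fin 2) 𝔽) ^ 2} := by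
  rw [← support_sum_monomial_coeff Q]
  apply Subalgebra.sum_mem
  intro m hm
  obtain ⟨k0, hk0⟩ := even_of_pderiv_zero 0 Q h0 m hm
  obtain ⟨k1, hk1⟩ := even_of_pderiv_zero 1 Q h1 m hm
  have hmono : (monomial m (coeff m Q) : MvPolynomial (Fin 2) 𝔽)
      = C (coeff m Q) * ((X 0 ^ 2) ^ k0 * (X 1 ^ 2) ^ k1) := by
    rw [monomial_eq, Finsupp.prod_fintype _ _ (fun i => pow_zero _)]
    rw [Fin.prod_univ_two, hk0, hk1]
    ring
  rw [hmono]
  exact mul_mem (by rw [← algebraMap_eq]; exact Subalgebra.algebraMap_mem _ _)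
    (mul_mem (pow_mem (subset_adjoin (by simp)) k0) (pow_mem (subset_adjoin (by simp)) k1))

abbrev L := AlgebraicClosure (ZMod 2)

lemma h2L : (2 : L) = 0 := by
  rw [show (2:L) = algebraMap 𝔽 L 2 from (map_ofNat _ 2).symm,
    show (2 : 𝔽) = 0 from rfl, map_zero]

lemma aeval_inj (v : Fin 2 → S)
    (hs : ∀ x : Fin 2 → L, ∃ y : Fin 3 → L, aeval y (v 0) = x 0 ∧ aeval y (v 1) = x 1)
    (Q : MvPolynomial (Fin 2) 𝔽) (hQ : aeval v Q = 0) : Q = 0 := by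
  have hmap : MvPolynomial.map (algebraMap 𝔽 L) Q = 0 := by
    apply MvPolynomial.funext
    intro x
    obtain ⟨y, h0, h1⟩ := hs x
    have hcomp := congrArg (fun t => (aeval y : S →ₐ[𝔽] L) t) hQ
    simp only [map_zero] at hcomp
    rw [← AlgHom.comp_apply, comp_aeval] at hcomp
    have hfun : (fun i => (aeval y : S →ₐ[𝔽] L) (v i)) = x := by
      funext i
      have : i = 0 ∨ i = 1 := fin2_cases i
      rcases this with rfl | rfl
      · exact h0
      · exact h1
    rw [hfun] at hcomp
    rw [eval_map, ← aeval_def, hcomp, map_zero]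
  apply MvPolynomial.map_injective (algebraMap 𝔽 L) (algebraMap 𝔽 L).injective (σ := Fin 2)
  rw [hmap, map_zero]

lemma surj_ce : ∀ x : Fin 2 → L, ∃ y : Fin 3 → L,
    aeval y pc = x 0 ∧ aeval y pe = x 1 := by
  intro x
  obtain ⟨a0, ha0⟩ := IsAlgClosed.exists_root
    (Polynomial.X ^ 3 + Polynomial.C (x 0) * Polynomial.X + Polynomial.C (x 1) : Polynomial L)
    (by
      have hdeg : (Polynomial.X ^ 3 + Polynomial.C (x 0) * Polynomial.X
          + Polynomial.C (x 1) : Polynomial L).degree = 3 := by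
        compute_degree!
      rw [hdeg]; norm_num)
  refine ⟨![a0, 0, x 0], by simp [pc], ?_⟩
  have hroot : a0 ^ 3 + x 0 * a0 + x 1 = 0 := by
    simpa [Polynomial.IsRoot] using ha0
  simp only [pe, pa, pc, map_add, map_mul, map_pow, aeval_X]
  show ![a0, 0, x 0] 0 * ![a0, 0, x 0] 2 + ![a0, 0, x 0] 0 ^ 3 = x 1
  simp only [Matrix.cons_val_zero, Matrix.cons_val_two, Matrix.tail_cons, Matrix.head_cons]
  linear_combination hroot - x 1 * h2L

lemma surj_ce2 : ∀ x : Fin 2 → L, ∃ y : Fin 3 → L,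
    aeval y (pc ^ 2) = x 0 ∧ aeval y (pe ^ 2) = x 1 := by
  intro x
  obtain ⟨u, hu⟩ := IsAlgClosed.exists_pow_nat_eq (x 0) (n := 2) (by norm_num)
  obtain ⟨w, hw⟩ := IsAlgClosed.exists_pow_nat_eq (x 1) (n := 2) (by norm_num)
  obtain ⟨y, hy0, hy1⟩ := surj_ce ![u, w]
  refine ⟨y, ?_, ?_⟩
  · rw [map_pow, hy0]; simpa using hu
  · rw [map_pow, hy1]; simpa using hw


lemma pd0_pc : pderiv 0 pc = 0 := pd0_X2
lemma pd2_pc : pderiv 2 pc = 1 := by rw [pc]; exact pderiv_X_self 2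

lemma sigma_aeval (Q : MvPolynomial (Fin 2) 𝔽) : σ (aeval ![pc, p6] Q) = aeval ![pc, pe] Q := by
  rw [← AlgHom.comp_apply, comp_aeval]
  have hf : (fun i => σ (![pc, p6] i)) = ![pc, pe] := by
    funext i
    have : i = 0 ∨ i = 1 := by
      rcases i with ⟨iv, hlt⟩
      interval_cases iv
      · left; rfl
      · right; rfl
    rcases this with rfl | rfl
    · simpa using σ_pc
    · simpa using σ_p6
  rw [hf]

lemma hne : pc + pa ^ 2 ≠ 0 := by
  intro h
  have := congrArg (eval (fun i => if i = 2 then (1:𝔽) else 0)) h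
  simp [pc, pa] at this

lemma key (Q : MvPolynomial (Fin 2) 𝔽) (hq0 : σ (pderiv 0 (aeval ![pc, p6] Q)) = 0)
    (hq2 : σ (pderiv 2 (aeval ![pc, p6] Q)) = 0) : aeval ![pc, p6] Q ∈ B0 := by
  have hch0 := chain ![pc, p6] 0 Q
  have hch2 := chain ![pc, p6] 2 Q
  simp only [Matrix.cons_val_zero, Matrix.cons_val_one, Matrix.head_cons] at hch0 hch2
  rw [hch0, pd0_pc, pd0_p6] at hq0
  rw [hch2, pd2_pc, pd2_p6] at hq2
  simp only [mul_zero, zero_add, mul_one, map_add, map_mul, map_pow, σ_pa, σ_pc,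
    sigma_aeval] at hq0 hq2
  have hB : aeval ![pc, pe] (pderiv 1 Q) = 0 := by
    rcases mul_eq_zero.mp hq0 with h | h
    · exact h
    · exact absurd h hne
  have hA : aeval ![pc, pe] (pderiv 0 Q) = 0 := by
    rw [hB, zero_mul, add_zero] at hq2
    exact hq2
  have hs : ∀ x : Fin 2 → L, ∃ y : Fin 3 → L,
      aeval y ((![pc, pe] : Fin 2 → S) 0) = x 0 ∧ aeval y ((![pc, pe] : Fin 2 → S) 1) = x 1 := by
    simpa using surj_ce
  have hQ0 : pderiv 0 Q = 0 := aeval_inj ![pc, pe] hs _ hA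
  have hQ1 : pderiv 1 Q = 0 := aeval_inj ![pc, pe] hs _ hB
  have hmem := squares_of_pderiv_zero Q hQ0 hQ1
  have himg : aeval ![pc, p6] Q ∈
      (adjoin 𝔽 {(X 0 : MvPolynomial (Fin 2) 𝔽) ^ 2, (X 1 : MvPolynomial (Fin 2) 𝔽) ^ 2}).map
        (aeval ![pc, p6]) := ⟨Q, hmem, rfl⟩
  rw [AlgHom.map_adjoin, Set.image_insert_eq, Set.image_singleton] at himg
  simpa [map_pow, B0] using himg


lemma range3 (x y z : S) : Set.range ![x, y, z] = {x, y, z} := by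
  rw [Matrix.range_cons, Matrix.range_cons_cons_empty]
  ext w
  simp only [Set.mem_insert_iff, Set.mem_singleton_iff, Set.union_singleton, Set.mem_union]
  try tauto

lemma range2 (x y : S) : Set.range ![x, y] = {x, y} := Matrix.range_cons_cons_empty x y _

lemma AA_rep : ∀ p ∈ AA, ∃ P : MvPolynomial (Fin 3) 𝔽, aeval ![pc, p6, p7] P = p := by
  intro p hp
  have : AA = (aeval ![pc, p6, p7] : MvPolynomial (Fin 3) 𝔽 →ₐ[𝔽] S).range := by
    rw [AA, ← range3, Algebra.adjoin_range_eq_range_aeval]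
  rw [this] at hp
  exact hp

lemma B0_rep : ∀ x ∈ B0, ∃ G : MvPolynomial (Fin 2) 𝔽, aeval ![pc ^ 2, p6 ^ 2] G = x := by
  intro x hx
  have : B0 = (aeval ![pc ^ 2, p6 ^ 2] : MvPolynomial (Fin 2) 𝔽 →ₐ[𝔽] S).range := by
    rw [B0, ← range2, Algebra.adjoin_range_eq_range_aeval]
  rw [this] at hx
  exact hx

lemma aeval_v_mem (P : MvPolynomial (Fin 3) 𝔽) : aeval ![pc, p6, p7] P ∈ AA := by
  induction P using MvPolynomial.induction_on with
  | C r => simpa [algebraMap_eq] using Subalgebra.algebraMap_mem AA r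
  | add p q hp hq => rw [map_add]; exact add_mem hp hq
  | mul_X p i hp =>
    rw [map_mul, aeval_X]
    refine mul_mem hp ?_
    have : i = 0 ∨ i = 1 ∨ i = 2 := fin3_cases i
    rcases this with rfl | rfl | rfl
    · simpa using hpcAA
    · simpa using hp6AA
    · simpa using hp7AA

lemma aeval_w_mem (P : MvPolynomial (Fin 3) 𝔽) : aeval ![pc, p6, 0] P ∈ AA := by
  induction P using MvPolynomial.induction_on with
  | C r => simpa [algebraMap_eq] using Subalgebra.algebraMap_mem AA r
  | add p q hp hq => rw [map_add]; exact add_mem hp hq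
  | mul_X p i hp =>
    rw [map_mul, aeval_X]
    refine mul_mem hp ?_
    have : i = 0 ∨ i = 1 ∨ i = 2 := fin3_cases i
    rcases this with rfl | rfl | rfl
    · simpa using hpcAA
    · simpa using hp6AA
    · simpa using (zero_mem AA)

lemma hdiff (P : MvPolynomial (Fin 3) 𝔽) :
    ∃ h ∈ AA, aeval ![pc, p6, p7] P = aeval ![pc, p6, 0] P + p7 * h := by
  induction P using MvPolynomial.induction_on with
  | C r => exact ⟨0, zero_mem AA, by simp⟩
  | add p q hp hq =>
    obtain ⟨h1, hh1, e1⟩ := hp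
    obtain ⟨h2m, hh2, e2⟩ := hq
    exact ⟨h1 + h2m, add_mem hh1 hh2, by rw [map_add, map_add, e1, e2]; ring⟩
  | mul_X p i hp =>
    obtain ⟨h1, hh1, e1⟩ := hp
    have : i = 0 ∨ i = 1 ∨ i = 2 := fin3_cases i
    rcases this with rfl | rfl | rfl
    · refine ⟨h1 * pc, mul_mem hh1 hpcAA, ?_⟩
      simp only [map_mul, aeval_X, Matrix.cons_val_zero, Matrix.cons_val_one, Matrix.head_cons,
        Matrix.cons_val_two, Matrix.tail_cons]
      rw [e1]; ring
    · refine ⟨h1 * p6, mul_mem hh1 hp6AA, ?_⟩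
      simp only [map_mul, aeval_X, Matrix.cons_val_zero, Matrix.cons_val_one, Matrix.head_cons,
        Matrix.cons_val_two, Matrix.tail_cons]
      rw [e1]; ring
    · refine ⟨aeval ![pc, p6, 0] p + p7 * h1, add_mem (aeval_w_mem p) (mul_mem hp7AA hh1), ?_⟩
      simp only [map_mul, aeval_X, Matrix.cons_val_zero, Matrix.cons_val_one, Matrix.head_cons,
        Matrix.cons_val_two, Matrix.tail_cons]
      rw [e1]; ring

lemma aeval_w_eq (P : MvPolynomial (Fin 3) 𝔽) :
    aeval ![pc, p6, 0] P = aeval ![pc, p6] (aeval ![X 0, X 1, (0 : MvPolynomial (Fin 2) 𝔽)] P) := by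
  rw [← AlgHom.comp_apply, comp_aeval]
  have hf : (fun i => (aeval ![pc, p6] : MvPolynomial (Fin 2) 𝔽 →ₐ[𝔽] S)
      (![X 0, X 1, (0 : MvPolynomial (Fin 2) 𝔽)] i)) = ![pc, p6, 0] := by
    funext i
    have : i = 0 ∨ i = 1 ∨ i = 2 := fin3_cases i
    rcases this with rfl | rfl | rfl <;> simp
  rw [hf]


lemma sigma_aeval2 (G : MvPolynomial (Fin 2) 𝔽) :
    σ (aeval ![pc ^ 2, p6 ^ 2] G) = aeval ![pc ^ 2, pe ^ 2] G := by
  rw [← AlgHom.comp_apply, comp_aeval]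
  have hf : (fun i => σ (![pc ^ 2, p6 ^ 2] i)) = ![pc ^ 2, pe ^ 2] := by
    funext i
    rcases fin2_cases i with rfl | rfl
    · simp only [Matrix.cons_val_zero, map_pow, σ_pc]
    · simp only [Matrix.cons_val_one, Matrix.head_cons, Matrix.cons_val_zero, map_pow, σ_p6]
  rw [hf]

lemma partA : (MM : Set S) ∩ (AA : Set S) = (NN : Set S) := by
  ext p
  constructor
  · rintro ⟨hpM, hpA⟩
    rw [SetLike.mem_coe] at hpM hpA ⊢
    obtain ⟨P, rfl⟩ := AA_rep p hpA
    obtain ⟨h, hhAA, heq⟩ := hdiff P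
    have hq : aeval ![pc, p6, 0] P = aeval ![pc, p6, p7] P + p7 * h := by
      linear_combination -heq - p7 * h * h2
    have hp7h : p7 * h ∈ NN := p7A_sub_NN h hhAA
    have hqM : aeval ![pc, p6, 0] P ∈ MM := by
      rw [hq]; exact add_mem hpM (NN_sub_MM _ hp7h)
    obtain ⟨hk0, hk2⟩ := hMker _ hqM
    rw [aeval_w_eq] at hk0 hk2
    have hB0 : aeval ![pc, p6, 0] P ∈ B0 := by
      rw [aeval_w_eq]; exact key _ hk0 hk2
    have hqNN : aeval ![pc, p6, 0] P ∈ NN := self_mem_span (B0_le_R2 hB0) (by simp)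
    rw [heq]
    exact add_mem hqNN hp7h
  · intro hp
    rw [SetLike.mem_coe] at hp
    exact ⟨NN_sub_MM p hp, NN_sub_AA p hp⟩

lemma partB : (NN : Set S) =
    ((Subalgebra.toSubmodule B0 ⊔
      (Subalgebra.toSubmodule AA).map (LinearMap.mulLeft 𝔽 p7) :
        Submodule 𝔽 S) : Set S) := by
  ext x
  rw [SetLike.mem_coe, SetLike.mem_coe]
  constructor
  · intro hx
    induction hx using Submodule.span_induction with
    | mem z hz =>
      rcases hz with rfl | rfl | rfl | rfl
      · exact Submodule.mem_sup_left (by simp [Subalgebra.mem_toSubmodule, one_mem])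
      · refine Submodule.mem_sup_right (Submodule.mem_map.mpr ⟨pc, ?_, ?_⟩)
        · simp [Subalgebra.mem_toSubmodule, hpcAA]
        · rw [LinearMap.mulLeft_apply]; ring
      · refine Submodule.mem_sup_right (Submodule.mem_map.mpr ⟨p6, ?_, ?_⟩)
        · simp [Subalgebra.mem_toSubmodule, hp6AA]
        · rw [LinearMap.mulLeft_apply]; ring
      · refine Submodule.mem_sup_right (Submodule.mem_map.mpr ⟨pc * p6, ?_, ?_⟩)
        · simp [Subalgebra.mem_toSubmodule, mul_mem hpcAA hp6AA]
        · rw [LinearMap.mulLeft_apply]; ring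
    | zero => exact zero_mem _
    | add u v hu hv ihu ihv => exact add_mem ihu ihv
    | smul r z hz ihz =>
      rw [smul_coe]
      obtain ⟨x0, hx0, v', hv', hsum⟩ := Submodule.mem_sup.mp ihz
      obtain ⟨x1, hx1, rfl⟩ := Submodule.mem_map.mp hv'
      rw [Subalgebra.mem_toSubmodule] at hx0 hx1
      rw [LinearMap.mulLeft_apply] at hsum
      obtain ⟨r0, hr0, r1, hr1, hrsplit⟩ := R2_split (r : S) r.2
      have hexp : (r : S) * z = r0 * x0 + p7 * (r0 * x1 + r1 * x0 + p7 * (r1 * x1)) := by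
        rw [← hsum, hrsplit]; ring
      rw [hexp]
      refine add_mem (Submodule.mem_sup_left ?_) (Submodule.mem_sup_right
        (Submodule.mem_map.mpr ⟨r0 * x1 + r1 * x0 + p7 * (r1 * x1), ?_, ?_⟩))
      · simp only [Subalgebra.mem_toSubmodule]; exact mul_mem hr0 hx0
      · simp only [Subalgebra.mem_toSubmodule]
        exact add_mem (add_mem (mul_mem (B0_le_AA hr0) hx1) (mul_mem hr1 (B0_le_AA hx0)))
          (mul_mem hp7AA (mul_mem hr1 hx1))
      · rw [LinearMap.mulLeft_apply]
  · intro hx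
    obtain ⟨u, hu, v, hv, rfl⟩ := Submodule.mem_sup.mp hx
    obtain ⟨h, hh, rfl⟩ := Submodule.mem_map.mp hv
    rw [Subalgebra.mem_toSubmodule] at hu hh
    rw [LinearMap.mulLeft_apply]
    exact add_mem (self_mem_span (B0_le_R2 hu) (by simp)) (p7A_sub_NN h hh)

lemma partC : Disjoint (Subalgebra.toSubmodule B0)
    ((Subalgebra.toSubmodule AA).map (LinearMap.mulLeft 𝔽 p7)) := by
  rw [Submodule.disjoint_def]
  intro x hxB hxmap
  obtain ⟨h, hh, rfl⟩ := Submodule.mem_map.mp hxmap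
  rw [Subalgebra.mem_toSubmodule] at hxB hh
  rw [LinearMap.mulLeft_apply] at hxB ⊢
  obtain ⟨G, hG⟩ := B0_rep _ hxB
  have hσ : σ (p7 * h) = 0 := by rw [map_mul, σ_p7, zero_mul]
  have hGzero : aeval ![pc ^ 2, pe ^ 2] G = 0 := by
    rw [← sigma_aeval2, hG, hσ]
  have hs : ∀ x : Fin 2 → L, ∃ y : Fin 3 → L,
      aeval y ((![pc ^ 2, pe ^ 2] : Fin 2 → S) 0) = x 0 ∧
      aeval y ((![pc ^ 2, pe ^ 2] : Fin 2 → S) 1) = x 1 := by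
    simpa using surj_ce2
  have : G = 0 := aeval_inj ![pc ^ 2, pe ^ 2] hs G hGzero
  rw [← hG, this, map_zero]

end
end InterDickson

/-- In `F₂[d₂, d₃, d₄]` with `d₆ = d₂d₄ + d₂³ + d₃²` and `d₇ = d₃d₄ + d₂²d₃`,
the intersection of the `F₂[d₃, d₂², d₄²]`-submodule generated by
`{1, d₂d₃, d₃d₄, d₂d₃d₄}` with the subalgebra `F₂[d₄, d₆, d₇]` equals the
`F₂[d₄², d₆², d₇]`-submodule generated by `{1, d₄d₇, d₆d₇, d₄d₆d₇}`;
equivalently, it is the internal direct sum `F₂[d₄², d₆²] ⊕ d₇·F₂[d₄, d₆, d₇]`. -/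
theorem intersection_with_dickson_algebra
    (d₂ d₃ d₄ d₆ d₇ : MvPolynomial (Fin 3) (ZMod 2))
    (hd₂ : d₂ = X 0) (hd₃ : d₃ = X 1) (hd₄ : d₄ = X 2)
    (hd₆ : d₆ = d₂ * d₄ + d₂ ^ 3 + d₃ ^ 2) (hd₇ : d₇ = d₃ * d₄ + d₂ ^ 2 * d₃) :
    ((Submodule.span
        ↥(Algebra.adjoin (ZMod 2) ({d₃, d₂ ^ 2, d₄ ^ 2} : Set (MvPolynomial (Fin 3) (ZMod 2))))
        ({1, d₂ * d₃, d₃ * d₄, d₂ * d₃ * d₄} : Set (MvPolynomial (Fin 3) (ZMod 2))) : Set (MvPolynomial (Fin 3) (ZMod 2))) ∩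
      (Algebra.adjoin (ZMod 2) ({d₄, d₆, d₇} : Set (MvPolynomial (Fin 3) (ZMod 2))) : Set (MvPolynomial (Fin 3) (ZMod 2))) =
      (Submodule.span
        ↥(Algebra.adjoin (ZMod 2) ({d₄ ^ 2, d₆ ^ 2, d₇} : Set (MvPolynomial (Fin 3) (ZMod 2))))
        ({1, d₄ * d₇, d₆ * d₇, d₄ * d₆ * d₇} : Set (MvPolynomial (Fin 3) (ZMod 2))) : Set (MvPolynomial (Fin 3) (ZMod 2)))) ∧
    ((Submodule.span
        ↥(Algebra.adjoin (ZMod 2) ({d₄ ^ 2, d₆ ^ 2, d₇} : Set (MvPolynomial (Fin 3) (ZMod 2))))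
        ({1, d₄ * d₇, d₆ * d₇, d₄ * d₆ * d₇} : Set (MvPolynomial (Fin 3) (ZMod 2))) : Set (MvPolynomial (Fin 3) (ZMod 2))) =
      ((Subalgebra.toSubmodule
          (Algebra.adjoin (ZMod 2) ({d₄ ^ 2, d₆ ^ 2} : Set (MvPolynomial (Fin 3) (ZMod 2)))) ⊔
        (Subalgebra.toSubmodule
          (Algebra.adjoin (ZMod 2)
            ({d₄, d₆, d₇} : Set (MvPolynomial (Fin 3) (ZMod 2))))).map
              (LinearMap.mulLeft (ZMod 2) d₇) : Submodule (ZMod 2) (MvPolynomial (Fin 3) (ZMod 2))) : Set (MvPolynomial (Fin 3) (ZMod 2)))) ∧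
    Disjoint
      (Subalgebra.toSubmodule
        (Algebra.adjoin (ZMod 2) ({d₄ ^ 2, d₆ ^ 2} : Set (MvPolynomial (Fin 3) (ZMod 2)))))
      ((Subalgebra.toSubmodule
        (Algebra.adjoin (ZMod 2)
          ({d₄, d₆, d₇} : Set (MvPolynomial (Fin 3) (ZMod 2))))).map
            (LinearMap.mulLeft (ZMod 2) d₇)) := by
  subst hd₆ hd₇ hd₂ hd₃ hd₄
  exact ⟨InterDickson.partA, InterDickson.partB, InterDickson.partC⟩
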